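/- Let X be a T1 regular topological space and let f : 𝕊 → X be a continuous open surjection from the Sorgenfrey line onto X. For rationals a < b, let P_{a,b} := { x ∈ [a, b) : for all y ∈ [a, b), f(y) = f(x) implies y = x }. Then for all rationals a < b, the set P_{a,b} is a closed subset of the Sorgenfrey line. -/

import Mathlib

open Set Filter Topology Function

/-- The Sorgenfrey line: the real line as a type synonym. -/
def SorgenfreyLine : Type := ℝ

notation "𝕊" => SorgenfreyLine

noncomputable instance : LinearOrder 𝕊 := inferInstanceAs (LinearOrder ℝ)
instance : RatCast 𝕊 := inferInstanceAs (RatCast ℝ)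

/-- The topology on the Sorgenfrey line, generated by half-open intervals `[a, b)`, `a < b`. -/
instance : TopologicalSpace 𝕊 :=
  TopologicalSpace.generateFrom {s : Set 𝕊 | ∃ a b : 𝕊, a < b ∧ s = Set.Ico a b}

/-- `Pab f a b` is the set of points `x ∈ [a, b)` that are the unique point of `[a, b)`
mapped by `f` to `f x`. -/
def Pab {X : Type*} (f : 𝕊 → X) (a b : 𝕊) : Set 𝕊 :=
  {x | x ∈ Set.Ico a b ∧ ∀ y ∈ Set.Ico a b, f y = f x → y = x}


theorem SL.lt_succ (x : 𝕊) : x < (show ℝ from x) + 1 := lt_add_one (show ℝ from x)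

theorem SL.isOpen_Ico (a b : 𝕊) : IsOpen (Ico a b) := by
  rcases lt_or_ge a b with h | h
  · exact TopologicalSpace.GenerateOpen.basic _ ⟨a, b, h, rfl⟩
  · rw [Ico_eq_empty h.not_gt]; exact isOpen_empty

theorem SL.exists_Ico_subset {u : Set 𝕊} (hu : IsOpen u) {x : 𝕊} (hx : x ∈ u) :
    ∃ b, x < b ∧ Ico x b ⊆ u := by
  have hu' : TopologicalSpace.GenerateOpen
      {s : Set 𝕊 | ∃ a b : 𝕊, a < b ∧ s = Set.Ico a b} u := hu
  clear hu
  induction hu' with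
  | basic s hs =>
    obtain ⟨c, d, hcd, rfl⟩ := hs
    exact ⟨d, hx.2, fun z hz => ⟨hx.1.trans hz.1, hz.2⟩⟩
  | univ => exact ⟨(show ℝ from x) + 1, SL.lt_succ x, fun _ _ => trivial⟩
  | inter s t _ _ ihs iht =>
    obtain ⟨b₁, hb₁, h₁⟩ := ihs hx.1
    obtain ⟨b₂, hb₂, h₂⟩ := iht hx.2
    exact ⟨min b₁ b₂, lt_min hb₁ hb₂,
      fun z hz => ⟨h₁ ⟨hz.1, hz.2.trans_le (min_le_left _ _)⟩,
        h₂ ⟨hz.1, hz.2.trans_le (min_le_right _ _)⟩⟩⟩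
  | sUnion S _ ih =>
    obtain ⟨s, hsS, hxs⟩ := hx
    obtain ⟨b, hb, h⟩ := ih s hsS hxs
    exact ⟨b, hb, fun z hz => ⟨s, hsS, h hz⟩⟩

theorem SL.nhds_basis_Ico (x : 𝕊) : (𝓝 x).HasBasis (x < ·) (Ico x ·) := by
  constructor
  intro t
  constructor
  · intro ht
    obtain ⟨u, hut, hu, hxu⟩ := mem_nhds_iff.1 ht
    obtain ⟨b, hb, h⟩ := SL.exists_Ico_subset hu hxu
    exact ⟨b, hb, h.trans hut⟩
  · rintro ⟨b, hb, h⟩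
    exact mem_of_superset ((SL.isOpen_Ico x b).mem_nhds ⟨le_rfl, hb⟩) h


/-- For a continuous open surjection `f` from the Sorgenfrey line onto a T1 regular space and
rationals `a < b`, the set `P_{a,b}` is closed in the Sorgenfrey line. -/
theorem stmt7 {X : Type} [TopologicalSpace X] [T1Space X] [RegularSpace X] (f : 𝕊 → X)
    (hf : Continuous f) (hopen : IsOpenMap f) (hsurj : Surjective f)
    (a b : ℚ) (hab : a < b) :
    IsClosed (Pab f (a : 𝕊) (b : 𝕊)) := by
  rw [← isOpen_compl_iff, isOpen_iff_mem_nhds]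
  intro x hx
  by_cases hxab : x ∈ Ico (a : 𝕊) (b : 𝕊)
  · have hex : ∃ y ∈ Ico (a : 𝕊) (b : 𝕊), f y = f x ∧ y ≠ x := by
      by_contra h
      push_neg at h
      exact hx ⟨hxab, fun y hy hfy => h y hy hfy⟩
    obtain ⟨y, hy, hfy, hyx⟩ := hex
    rcases hyx.lt_or_gt with hlt | hgt
    · -- y < x : use U = Ico y x
      have hV : IsOpen (f ⁻¹' (f '' Ico y x)) :=
        hf.isOpen_preimage _ (hopen _ (SL.isOpen_Ico y x))
      have hxV : x ∈ f ⁻¹' (f '' Ico y x) := ⟨y, ⟨le_rfl, hlt⟩, hfy⟩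
      filter_upwards [hV.mem_nhds hxV, (SL.nhds_basis_Ico x).mem_of_mem hxab.2]
        with z hzV hzI hzP
      obtain ⟨w, hwU, hfw⟩ := hzV
      exact absurd (hzP.2 w ⟨hy.1.trans hwU.1, hwU.2.trans hxab.2⟩ hfw)
        (hwU.2.trans_le hzI.1).ne
    · -- x < y : use U = Ico y b
      have hV : IsOpen (f ⁻¹' (f '' Ico y (b : 𝕊))) :=
        hf.isOpen_preimage _ (hopen _ (SL.isOpen_Ico y (b : 𝕊)))
      have hxV : x ∈ f ⁻¹' (f '' Ico y (b : 𝕊)) := ⟨y, ⟨le_rfl, hy.2⟩, hfy⟩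
      filter_upwards [hV.mem_nhds hxV, (SL.nhds_basis_Ico x).mem_of_mem hgt]
        with z hzV hzI hzP
      obtain ⟨w, hwU, hfw⟩ := hzV
      exact absurd (hzP.2 w ⟨hy.1.trans hwU.1, hwU.2⟩ hfw)
        (hzI.2.trans_le hwU.1).ne'
  · rcases lt_or_ge x (a : 𝕊) with hxa | hax
    · filter_upwards [(SL.nhds_basis_Ico x).mem_of_mem hxa] with z hz hzP
      exact absurd hzP.1.1 (not_le.2 hz.2)
    · have hbx : (b : 𝕊) ≤ x := le_of_not_gt fun h => hxab ⟨hax, h⟩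
      filter_upwards [(SL.nhds_basis_Ico x).mem_of_mem (SL.lt_succ x)] with z hz hzP
      exact absurd hzP.1.2 (not_lt.2 (hbx.trans hz.1))
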